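/- Let (M,d) be a metric space such that there exists a real inner product space V and a map ψ : M → V with d(x,y) = ‖ψ(x) − ψ(y)‖ for all x,y ∈ M. Then the Gaussian kernel k(x,y) = exp(−γ d(x,y)²) is positive definite for every γ > 0. -/

import Mathlib

def IsPosDefKernel {X : Type*} (k : X → X → ℝ) : Prop :=
  (∀ x y, k x y = k y x) ∧
  ∀ (m : ℕ) (x : Fin m → X) (c : Fin m → ℝ),
    0 ≤ ∑ i, ∑ j, c i * c j * k (x i) (x j)

open Real MeasureTheory
open scoped RealInnerProductSpace

section aux

variable {n : ℕ}

local notation "E" => EuclideanSpace ℝ (Fin n)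

lemma gauss_integrable {b : ℝ} (hb : 0 < b) :
    Integrable (fun v : E => rexp (-b * ‖v‖ ^ 2)) := by
  have h := (GaussianFourier.integrable_cexp_neg_mul_sq_norm_add
    (V := E) (b := (b : ℂ)) (by simpa using hb) 0 0).norm
  convert h using 2 with v
  rw [Complex.norm_exp]
  simp [Complex.add_re, Complex.mul_re, ← Complex.ofReal_pow]

lemma pointwise_id (γ : ℝ) (a b v : E) :
    rexp (-(2 * γ) * ‖a - v‖ ^ 2) * rexp (-(2 * γ) * ‖b - v‖ ^ 2)
      = rexp (-γ * ‖a - b‖ ^ 2) * rexp (-(4 * γ) * ‖v - (2:ℝ)⁻¹ • (a + b)‖ ^ 2) := by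
  rw [← Real.exp_add, ← Real.exp_add]
  congr 1
  have h1 : ‖a - v‖ ^ 2 = ‖a‖ ^ 2 - 2 * ⟪a, v⟫ + ‖v‖ ^ 2 := norm_sub_sq_real a v
  have h2 : ‖b - v‖ ^ 2 = ‖b‖ ^ 2 - 2 * ⟪b, v⟫ + ‖v‖ ^ 2 := norm_sub_sq_real b v
  have h3 : ‖a - b‖ ^ 2 = ‖a‖ ^ 2 - 2 * ⟪a, b⟫ + ‖b‖ ^ 2 := norm_sub_sq_real a b
  have h4 : ‖v - (2:ℝ)⁻¹ • (a + b)‖ ^ 2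
      = ‖v‖ ^ 2 - 2 * ((2:ℝ)⁻¹ * (⟪v, a⟫ + ⟪v, b⟫)) + (2:ℝ)⁻¹ ^ 2 * (‖a‖ ^ 2 + 2 * ⟪a, b⟫ + ‖b‖ ^ 2) := by
    rw [norm_sub_sq_real, inner_smul_right, inner_add_right, norm_smul, mul_pow,
      norm_add_sq_real]
    norm_num
  rw [h1, h2, h3, h4, real_inner_comm v a, real_inner_comm v b]
  ring

lemma key (γ : ℝ) (hγ : 0 < γ) (m : ℕ) (w : Fin m → E) (c : Fin m → ℝ) :
    0 ≤ ∑ i, ∑ j, c i * c j * rexp (-γ * ‖w i - w j‖ ^ 2) := by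
  set C : ℝ := ∫ v : E, rexp (-(4 * γ) * ‖v‖ ^ 2) with hC
  have hCpos : 0 < C := by
    rw [hC, GaussianFourier.integral_rexp_neg_mul_sq_norm (by linarith)]
    positivity
  have hint : ∀ a : E, Integrable (fun v : E => rexp (-(4 * γ) * ‖v - a‖ ^ 2)) :=
    fun a => (gauss_integrable (by linarith)).comp_sub_right a
  have hterm : ∀ i j, Integrable (fun v : E =>
      (c i * rexp (-(2 * γ) * ‖w i - v‖ ^ 2)) * (c j * rexp (-(2 * γ) * ‖w j - v‖ ^ 2))) := by
    intro i j
    have : (fun v : E => (c i * rexp (-(2 * γ) * ‖w i - v‖ ^ 2)) * (c j * rexp (-(2 * γ) * ‖w j - v‖ ^ 2)))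
        = fun v : E => (c i * c j * rexp (-γ * ‖w i - w j‖ ^ 2)) *
            rexp (-(4 * γ) * ‖v - (2:ℝ)⁻¹ • (w i + w j)‖ ^ 2) := by
      funext v
      have h := pointwise_id γ (w i) (w j) v
      calc c i * rexp (-(2 * γ) * ‖w i - v‖ ^ 2) * (c j * rexp (-(2 * γ) * ‖w j - v‖ ^ 2))
          = c i * c j * (rexp (-(2 * γ) * ‖w i - v‖ ^ 2) * rexp (-(2 * γ) * ‖w j - v‖ ^ 2)) := by ring
        _ = _ := by rw [h]; ring
    rw [this]
    exact (hint _).const_mul _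
  have hpoint : ∀ i j, (∫ v : E,
      (c i * rexp (-(2 * γ) * ‖w i - v‖ ^ 2)) * (c j * rexp (-(2 * γ) * ‖w j - v‖ ^ 2)))
      = c i * c j * rexp (-γ * ‖w i - w j‖ ^ 2) * C := by
    intro i j
    have heq : (fun v : E => (c i * rexp (-(2 * γ) * ‖w i - v‖ ^ 2)) * (c j * rexp (-(2 * γ) * ‖w j - v‖ ^ 2)))
        = fun v : E => (c i * c j * rexp (-γ * ‖w i - w j‖ ^ 2)) *
            rexp (-(4 * γ) * ‖v - (2:ℝ)⁻¹ • (w i + w j)‖ ^ 2) := by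
      funext v
      have h := pointwise_id γ (w i) (w j) v
      calc c i * rexp (-(2 * γ) * ‖w i - v‖ ^ 2) * (c j * rexp (-(2 * γ) * ‖w j - v‖ ^ 2))
          = c i * c j * (rexp (-(2 * γ) * ‖w i - v‖ ^ 2) * rexp (-(2 * γ) * ‖w j - v‖ ^ 2)) := by ring
        _ = _ := by rw [h]; ring
    rw [heq, integral_const_mul]
    congr 1
    rw [hC]
    exact integral_sub_right_eq_self (fun v : E => rexp (-(4 * γ) * ‖v‖ ^ 2)) _
  set g : E → ℝ := fun v => ∑ i, c i * rexp (-(2 * γ) * ‖w i - v‖ ^ 2) with hg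
  have hsq : ∫ v : E, (g v) ^ 2
      = (∑ i, ∑ j, c i * c j * rexp (-γ * ‖w i - w j‖ ^ 2)) * C := by
    have : ∀ v : E, (g v) ^ 2 = ∑ i, ∑ j,
        (c i * rexp (-(2 * γ) * ‖w i - v‖ ^ 2)) * (c j * rexp (-(2 * γ) * ‖w j - v‖ ^ 2)) := by
      intro v
      rw [sq, hg, Finset.sum_mul_sum]
    simp_rw [this]
    rw [integral_finset_sum _ (fun i _ => integrable_finset_sum _ (fun j _ => hterm i j))]
    rw [Finset.sum_mul]
    congr 1; funext i
    rw [integral_finset_sum _ (fun j _ => hterm i j), Finset.sum_mul]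
    congr 1; funext j
    exact hpoint i j
  have hnonneg : 0 ≤ ∫ v : E, (g v) ^ 2 := integral_nonneg (fun v => sq_nonneg _)
  rw [hsq] at hnonneg
  exact (mul_nonneg_iff_of_pos_right hCpos).mp hnonneg
end aux

theorem gaussian_posdef_of_hilbert_embedding
    {M : Type*} [MetricSpace M] {V : Type*} [NormedAddCommGroup V] [InnerProductSpace ℝ V]
    (ψ : M → V) (hψ : ∀ x y : M, dist x y = ‖ψ x - ψ y‖) :
    ∀ γ : ℝ, 0 < γ →
      IsPosDefKernel (fun x y : M => Real.exp (-γ * dist x y ^ 2)) := by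
  intro γ hγ
  constructor
  · intro x y
    simp only [dist_comm]
  · intro m x c
    set W : Submodule ℝ V := Submodule.span ℝ (Set.range (fun i => ψ (x i))) with hW
    haveI : FiniteDimensional ℝ W :=
      FiniteDimensional.span_of_finite ℝ (Set.finite_range _)
    let e := (stdOrthonormalBasis ℝ W).repr
    let w : Fin m → EuclideanSpace ℝ (Fin (Module.finrank ℝ W)) :=
      fun i => e ⟨ψ (x i), Submodule.subset_span (Set.mem_range_self i)⟩
    have hd : ∀ i j, dist (x i) (x j) = ‖w i - w j‖ := by
      intro i j
      rw [hψ]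
      have hw : w i - w j = e (⟨ψ (x i), Submodule.subset_span (Set.mem_range_self i)⟩
          - ⟨ψ (x j), Submodule.subset_span (Set.mem_range_self j)⟩) := (map_sub e _ _).symm
      rw [hw, LinearIsometryEquiv.norm_map]
      rfl
    simp only [hd]
    exact key γ hγ m w c
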